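/- Suppose Y : ℝ × ℝ → ℝ^n is C² with (Y'·Y')=1, (Ẏ·Y')=0, and Y satisfies the equation Ÿ − Y'' + (1/2)∂σ(|Ẏ|² Y') = 0. Then (Ẏ·Ÿ) = 0 everywhere, i.e. |Ẏ|² is constant along τ. -/

import Mathlib

open scoped RealInnerProductSpace

noncomputable def pt {n : ℕ} (Y : ℝ × ℝ → EuclideanSpace ℝ (Fin n)) (p : ℝ × ℝ) :
    EuclideanSpace ℝ (Fin n) := deriv (fun t => Y (t, p.2)) p.1

noncomputable def ps {n : ℕ} (Y : ℝ × ℝ → EuclideanSpace ℝ (Fin n)) (p : ℝ × ℝ) :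
    EuclideanSpace ℝ (Fin n) := deriv (fun s => Y (p.1, s)) p.2

section aux

variable {n : ℕ}

local notation "E" => EuclideanSpace ℝ (Fin n)

lemma hasDerivAt_sliceT {G : ℝ × ℝ → E} {p : ℝ × ℝ} (hG : DifferentiableAt ℝ G p) :
    HasDerivAt (fun t => G (t, p.2)) (fderiv ℝ G p ((1 : ℝ), (0 : ℝ))) p.1 := by
  have h := hG.hasFDerivAt.comp_hasDerivAt p.1
    ((hasDerivAt_id p.1).prodMk (hasDerivAt_const p.1 p.2))
  exact h

lemma hasDerivAt_sliceS {G : ℝ × ℝ → E} {p : ℝ × ℝ} (hG : DifferentiableAt ℝ G p) :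
    HasDerivAt (fun s => G (p.1, s)) (fderiv ℝ G p ((0 : ℝ), (1 : ℝ))) p.2 := by
  have h := hG.hasFDerivAt.comp_hasDerivAt p.2
    ((hasDerivAt_const p.2 p.1).prodMk (hasDerivAt_id p.2))
  exact h

lemma pt_eq {G : ℝ × ℝ → E} (hG : Differentiable ℝ G) (p : ℝ × ℝ) :
    pt G p = fderiv ℝ G p ((1 : ℝ), (0 : ℝ)) := (hasDerivAt_sliceT (hG p)).deriv

lemma ps_eq {G : ℝ × ℝ → E} (hG : Differentiable ℝ G) (p : ℝ × ℝ) :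
    ps G p = fderiv ℝ G p ((0 : ℝ), (1 : ℝ)) := (hasDerivAt_sliceS (hG p)).deriv

end aux

theorem stmt2 {n : ℕ} (Y : ℝ × ℝ → EuclideanSpace ℝ (Fin n))
    (hY : ContDiff ℝ 2 Y)
    (h1 : ∀ p : ℝ × ℝ, ⟪ps Y p, ps Y p⟫ = 1)
    (h2 : ∀ p : ℝ × ℝ, ⟪pt Y p, ps Y p⟫ = 0)
    (heom : ∀ p : ℝ × ℝ,
      pt (pt Y) p - ps (ps Y) p
        + (1 / 2 : ℝ) • ps (fun q => (‖pt Y q‖ ^ 2 : ℝ) • ps Y q) p = 0) :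
    ∀ p : ℝ × ℝ, ⟪pt Y p, pt (pt Y) p⟫ = 0 := by
  intro p
  have hd : Differentiable ℝ Y := hY.differentiable (by norm_num)
  set F := fderiv ℝ Y with hFdef
  have hF : ContDiff ℝ 1 F := hY.fderiv_right (le_refl 2)
  have hFd : Differentiable ℝ F := hF.differentiable one_ne_zero
  -- pt Y and ps Y as evaluations of F
  have hptY : pt Y = fun q => F q ((1 : ℝ), (0 : ℝ)) := funext fun q => pt_eq hd q
  have hpsY : ps Y = fun q => F q ((0 : ℝ), (1 : ℝ)) := funext fun q => ps_eq hd q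
  have happ : ∀ v : ℝ × ℝ, Differentiable ℝ (fun q => F q v) := fun v =>
    (ContinuousLinearMap.apply ℝ (EuclideanSpace ℝ (Fin n)) v).differentiable.comp hFd
  have hfderiv_app : ∀ (v : ℝ × ℝ) (q w : ℝ × ℝ),
      fderiv ℝ (fun q => F q v) q w = fderiv ℝ F q w v := by
    intro v q w
    have : HasFDerivAt (fun q => F q v)
        ((ContinuousLinearMap.apply ℝ (EuclideanSpace ℝ (Fin n)) v).comp (fderiv ℝ F q)) q :=
      (ContinuousLinearMap.apply ℝ (EuclideanSpace ℝ (Fin n)) v).hasFDerivAt.comp q (hFd q).hasFDerivAt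
    rw [this.fderiv]
    rfl
  set F2 := fderiv ℝ F p with hF2def
  have hsymm : ∀ v w : ℝ × ℝ, F2 v w = F2 w v := fun v w =>
    second_derivative_symmetric (fun y => (hd y).hasFDerivAt) (hFd p).hasFDerivAt v w
  set a := pt Y p with ha
  set b := ps Y p with hb
  set Yss := F2 ((0:ℝ),(1:ℝ)) ((0:ℝ),(1:ℝ)) with hYss
  set Yst := F2 ((0:ℝ),(1:ℝ)) ((1:ℝ),(0:ℝ)) with hYst
  set Yts := F2 ((1:ℝ),(0:ℝ)) ((0:ℝ),(1:ℝ)) with hYts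
  -- slice derivatives of pt Y and ps Y
  have hu : HasDerivAt (fun s => pt Y (p.1, s)) Yst p.2 := by
    rw [hptY]
    have h := hasDerivAt_sliceS (G := fun q => F q ((1:ℝ),(0:ℝ))) (happ _ p)
    rwa [hfderiv_app] at h
  have hvS : HasDerivAt (fun s => ps Y (p.1, s)) Yss p.2 := by
    rw [hpsY]
    have h := hasDerivAt_sliceS (G := fun q => F q ((0:ℝ),(1:ℝ))) (happ _ p)
    rwa [hfderiv_app] at h
  have hvT : HasDerivAt (fun t => ps Y (t, p.2)) Yts p.1 := by
    rw [hpsY]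
    have h := hasDerivAt_sliceT (G := fun q => F q ((0:ℝ),(1:ℝ))) (happ _ p)
    rwa [hfderiv_app] at h
  have haS : HasDerivAt (fun s => pt Y (p.1, s)) Yst p.2 := hu
  -- differentiate h1 along τ : ⟪Yts, b⟫ = 0
  have hYtsb : ⟪Yts, b⟫ = 0 := by
    have hconst : (fun t => ⟪ps Y (t, p.2), ps Y (t, p.2)⟫) = fun _ => (1 : ℝ) :=
      funext fun t => h1 (t, p.2)
    have hder := HasDerivAt.inner ℝ hvT hvT
    have h0 : HasDerivAt (fun _ : ℝ => (1:ℝ)) 0 p.1 := hasDerivAt_const _ _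
    rw [hconst] at hder
    have := hder.unique h0
    have hsym : ⟪ps Y (p.1, p.2), Yts⟫ = ⟪Yts, b⟫ := by
      rw [real_inner_comm, hb]
    rw [hsym] at this
    have hb2 : ⟪Yts, ps Y (p.1, p.2)⟫ = ⟪Yts, b⟫ := by rw [hb]
    rw [hb2] at this
    linarith
  -- differentiate h2 along σ : ⟪a, Yss⟫ + ⟪Yst, b⟫ = 0
  have haYss : ⟪a, Yss⟫ = 0 := by
    have hconst : (fun s => ⟪pt Y (p.1, s), ps Y (p.1, s)⟫) = fun _ => (0 : ℝ) :=
      funext fun s => h2 (p.1, s)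
    have hder := HasDerivAt.inner ℝ haS hvS
    have h0 : HasDerivAt (fun _ : ℝ => (0:ℝ)) 0 p.2 := hasDerivAt_const _ _
    rw [hconst] at hder
    have heq := hder.unique h0
    have e1 : ⟪pt Y (p.1, p.2), Yss⟫ = ⟪a, Yss⟫ := by rw [ha]
    have e2 : ⟪Yst, ps Y (p.1, p.2)⟫ = ⟪Yst, b⟫ := by rw [hb]
    rw [e1, e2] at heq
    have hsteq : Yst = Yts := hsymm _ _
    rw [hsteq, hYtsb] at heq
    linarith
  -- compute ps (ps Y) p = Yss
  have hpsps : ps (ps Y) p = Yss := by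
    have := hvS.deriv
    simpa [ps] using this
  -- compute ps of the product term
  set c' : ℝ := ⟪a, Yst⟫ + ⟪Yst, a⟫ with hc'
  have hprod : ps (fun q => (‖pt Y q‖ ^ 2 : ℝ) • ps Y q) p
      = c' • b + (‖a‖ ^ 2 : ℝ) • Yss := by
    have hcd : HasDerivAt (fun s => (‖pt Y (p.1, s)‖ ^ 2 : ℝ)) c' p.2 := by
      have h := HasDerivAt.inner ℝ haS haS
      have hfun : (fun s => ⟪pt Y (p.1, s), pt Y (p.1, s)⟫) =
          fun s => (‖pt Y (p.1, s)‖ ^ 2 : ℝ) :=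
        funext fun s => real_inner_self_eq_norm_sq _
      rw [hfun] at h
      have : ⟪pt Y (p.1, p.2), Yst⟫ + ⟪Yst, pt Y (p.1, p.2)⟫ = c' := by
        rw [hc', ha]
      rwa [this] at h
    have hD : HasDerivAt (fun s => (‖pt Y (p.1, s)‖ ^ 2 : ℝ) • ps Y (p.1, s))
        ((‖pt Y (p.1, p.2)‖ ^ 2 : ℝ) • Yss + c' • ps Y (p.1, p.2)) p.2 :=
      hcd.smul hvS
    have hde := hD.deriv
    have hpe : ((p.1, p.2) : ℝ × ℝ) = p := rfl
    rw [hpe, ← ha, ← hb] at hde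
    rw [show ps (fun q => (‖pt Y q‖ ^ 2 : ℝ) • ps Y q) p
        = deriv (fun s => (‖pt Y (p.1, s)‖ ^ 2 : ℝ) • ps Y (p.1, s)) p.2 from rfl, hde]
    abel
  -- from the eom
  have hYtt : pt (pt Y) p = ps (ps Y) p
      - (1 / 2 : ℝ) • ps (fun q => (‖pt Y q‖ ^ 2 : ℝ) • ps Y q) p := by
    have h := heom p
    rw [sub_add_eq_add_sub, sub_eq_zero] at h
    exact eq_sub_of_add_eq h
  rw [hYtt, hpsps, hprod]
  have hab : ⟪a, b⟫ = 0 := by rw [ha, hb]; exact h2 p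
  rw [inner_sub_right, inner_smul_right, inner_add_right, inner_smul_right,
    inner_smul_right, haYss, hab]
  ring
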